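/- Let 1 < p < 2. For every λ ∈ [2^{1−1/p}, 2^{1/p}] there exist vectors u, v ∈ ℝ^2 with ‖u‖_p = ‖v‖_p = 1 such that ‖u + v‖_p = ‖u − v‖_p = λ. -/

import Mathlib

open Real

/-- For `1 < p < 2` and any `λ ∈ [2^(1-1/p), 2^(1/p)]` there are unit vectors
`u, v` in `ℓ_p^2` with `‖u + v‖_p = ‖u - v‖_p = λ`. -/
theorem exists_unit_vectors_sum_diff_eq (p : ℝ) (hp1 : 1 < p) (hp2 : p < 2)
    (lam : ℝ) (hlam : lam ∈ Set.Icc ((2 : ℝ) ^ (1 - 1 / p)) ((2 : ℝ) ^ (1 / p))) :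
    ∃ u v : Fin 2 → ℝ,
      (∑ i, |u i| ^ p) ^ (1 / p) = 1 ∧
      (∑ i, |v i| ^ p) ^ (1 / p) = 1 ∧
      (∑ i, |u i + v i| ^ p) ^ (1 / p) = lam ∧
      (∑ i, |u i - v i| ^ p) ^ (1 / p) = lam := by
  have hp0 : (0:ℝ) < p := by linarith
  have hpne : p ≠ 0 := hp0.ne'
  set c : ℝ := (2:ℝ) ^ (-(1/p)) with hc
  have hc0 : 0 < c := Real.rpow_pos_of_pos two_pos _
  have hc1 : c ≤ 1 := by
    apply Real.rpow_le_one_of_one_le_of_nonpos one_le_two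
    simp only [neg_nonpos]
    positivity
  have hcp : c ^ p = 1/2 := by
    rw [hc, ← Real.rpow_mul (by norm_num), show -(1/p) * p = -1 by field_simp]
    norm_num [Real.rpow_neg_one]
  set b : ℝ → ℝ := fun t => (1 - t ^ p) ^ (1/p) with hb
  set g : ℝ → ℝ := fun t => ((t + b t) ^ p + (t - b t) ^ p) ^ (1/p) with hg
  -- facts on Icc c 1
  have key : ∀ t ∈ Set.Icc c 1, 0 < t ∧ 0 ≤ 1 - t ^ p ∧ 0 ≤ b t ∧
      (b t) ^ p = 1 - t ^ p ∧ b t ≤ t := by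
    intro t ⟨hct, ht1⟩
    have ht0 : 0 < t := lt_of_lt_of_le hc0 hct
    have htp1 : t ^ p ≤ 1 := Real.rpow_le_one ht0.le ht1 hp0.le
    have h1 : 0 ≤ 1 - t ^ p := by linarith
    have hbp : (b t) ^ p = 1 - t ^ p := by
      rw [hb]; simp only
      rw [one_div, Real.rpow_inv_rpow h1 hpne]
    have hb0 : 0 ≤ b t := Real.rpow_nonneg h1 _
    have hcpt : (1:ℝ)/2 ≤ t ^ p := by
      rw [← hcp]; exact Real.rpow_le_rpow hc0.le hct hp0.le
    have hble : b t ≤ t := by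
      have : b t ≤ (t ^ p) ^ (1/p) := by
        apply Real.rpow_le_rpow h1 (by linarith) (by positivity)
      rwa [one_div, Real.rpow_rpow_inv ht0.le hpne] at this
    exact ⟨ht0, h1, hb0, hbp, hble⟩
  -- endpoint values
  have hbc : b c = c := by
    rw [hb]; simp only [hcp]
    rw [show (1:ℝ) - 1/2 = ((2:ℝ))⁻¹ by norm_num, ← Real.rpow_neg_one,
      ← Real.rpow_mul (by norm_num)]
    ring_nf
    rw [hc, one_div]
  have hgc : g c = (2:ℝ) ^ (1 - 1/p) := by
    rw [hg]; simp only [hbc]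
    rw [sub_self, Real.zero_rpow hpne, add_zero,
      show c + c = 2 * c by ring,
      Real.mul_rpow (by norm_num) hc0.le, hcp,
      show (2:ℝ) ^ p * (1/2) = 2 ^ p * 2 ^ (-1:ℝ) by norm_num [Real.rpow_neg_one],
      ← Real.rpow_add two_pos, ← Real.rpow_mul (by norm_num)]
    congr 1
    field_simp
    ring
  have hb1 : b 1 = 0 := by
    rw [hb]; simp [Real.one_rpow, Real.zero_rpow (inv_ne_zero hpne), one_div]
  have hg1 : g 1 = (2:ℝ) ^ (1/p) := by
    rw [hg]; simp [hb1, Real.one_rpow]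
    norm_num
  -- continuity
  have hcont : ContinuousOn g (Set.Icc c 1) := by
    have htp : ContinuousOn (fun t : ℝ => t ^ p) (Set.Icc c 1) := by
      apply ContinuousOn.rpow_const continuousOn_id
      intro t ht
      exact Or.inl (key t ht).1.ne'
    have hbcont : ContinuousOn b (Set.Icc c 1) := by
      apply ContinuousOn.rpow_const (by fun_prop)
      intro t ht
      exact Or.inr (by positivity)
    apply ContinuousOn.rpow_const
    · apply ContinuousOn.add
      · apply ContinuousOn.rpow_const (by fun_prop)
        intro t ht
        exact Or.inr hp0.le
      · apply ContinuousOn.rpow_const (by fun_prop)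
        intro t ht
        exact Or.inr hp0.le
    · intro t ht
      exact Or.inr (by positivity)
  -- IVT
  have hsub : Set.Icc (g c) (g 1) ⊆ g '' Set.Icc c 1 :=
    intermediate_value_Icc hc1 hcont
  have hlam' : lam ∈ Set.Icc (g c) (g 1) := by rw [hgc, hg1]; exact hlam
  obtain ⟨t, ht, hgt⟩ := hsub hlam'
  obtain ⟨ht0, h1, hb0, hbp, hble⟩ := key t ht
  refine ⟨![t, b t], ![b t, -t], ?_, ?_, ?_, ?_⟩
  · rw [Fin.sum_univ_two]
    simp only [Matrix.cons_val_zero, Matrix.cons_val_one, Matrix.head_cons,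
      abs_of_nonneg ht0.le, abs_of_nonneg hb0, hbp]
    norm_num
  · rw [Fin.sum_univ_two]
    simp only [Matrix.cons_val_zero, Matrix.cons_val_one, Matrix.head_cons,
      abs_neg, abs_of_nonneg ht0.le, abs_of_nonneg hb0, hbp]
    rw [show 1 - t ^ p + t ^ p = 1 by ring]
    exact Real.one_rpow _
  · rw [Fin.sum_univ_two]
    simp only [Matrix.cons_val_zero, Matrix.cons_val_one, Matrix.head_cons]
    rw [show b t + -t = -(t - b t) by ring, abs_neg,
      abs_of_nonneg (by linarith : (0:ℝ) ≤ t + b t),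
      abs_of_nonneg (by linarith : (0:ℝ) ≤ t - b t)]
    exact hgt
  · rw [Fin.sum_univ_two]
    simp only [Matrix.cons_val_zero, Matrix.cons_val_one, Matrix.head_cons]
    rw [show b t - -t = t + b t by ring,
      abs_of_nonneg (by linarith : (0:ℝ) ≤ t + b t),
      abs_of_nonneg (by linarith : (0:ℝ) ≤ t - b t), add_comm]
    exact hgt
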